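/- Let n > 2 be an integer. For every regular language L over any finite alphabet with sc(L) ≤ n, the square root √L = {w | w·w ∈ L} satisfies sc(√L) ≤ n^n − n(n−1)/2. -/

import Mathlib

/-- `L` is recognized by some complete DFA with exactly `n` states. -/
def recognizedBy {α : Type} (L : Language α) (n : ℕ) : Prop :=
  ∃ M : DFA α (Fin n), M.accepts = L

/-- The state complexity of a language: the minimal number of states of a
complete DFA recognizing it. -/
noncomputable def sc {α : Type} (L : Language α) : ℕ :=
  sInf {n | recognizedBy L n}

/-- The square root of a language: `√L = {w | w·w ∈ L}`. -/
def sqrtLang {α : Type} (L : Language α) : Language α :=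
  {w | w ++ w ∈ L}

/-! ### Auxiliary machinery -/

/-- Transporting a DFA along a section/retraction pair. -/
lemma exists_dfa_of_retract {α σ τ : Type} (M : DFA α σ) (e : σ → τ) (r : τ → σ)
    (hre : ∀ s, r (e s) = s) : ∃ N : DFA α τ, N.accepts = M.accepts := by
  refine ⟨⟨fun q a => e (M.step (r q) a), e M.start, r ⁻¹' M.accept⟩, ?_⟩
  set N : DFA α τ := ⟨fun q a => e (M.step (r q) a), e M.start, r ⁻¹' M.accept⟩ with hN
  have key : ∀ (w : List α) (s : σ), N.evalFrom (e s) w = e (M.evalFrom s w) := by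
    intro w
    induction w with
    | nil => intro s; rfl
    | cons a w ih =>
        intro s
        have hstep : N.step (e s) a = e (M.step s a) := by
          simp [hN, hre]
        show N.evalFrom (N.step (e s) a) w = e (M.evalFrom (M.step s a) w)
        rw [hstep, ih]
  ext w
  simp only [DFA.mem_accepts, DFA.eval]
  show N.evalFrom (e M.start) w ∈ r ⁻¹' M.accept ↔ _
  rw [key, Set.mem_preimage, hre]

/-- If a DFA on a fintype has at most `m` states, the language is recognized by a
DFA with exactly `m` states. -/
lemma recognizedBy_of_card_le {α σ : Type} [Fintype σ] (M : DFA α σ) {m : ℕ}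
    (hm : Fintype.card σ ≤ m) : recognizedBy M.accepts m := by
  classical
  set c := Fintype.card σ with hc
  set E := Fintype.equivFin σ with hE
  have hretr : ∀ s : σ,
      (fun t : Fin m => if h : (t : ℕ) < c then E.symm ⟨t, h⟩ else M.start)
        ((fun s => (⟨(E s : ℕ), lt_of_lt_of_le (E s).2 hm⟩ : Fin m)) s) = s := by
    intro s
    simp only [dif_pos (E s).2, Fin.eta, Equiv.symm_apply_apply]
    exact dif_pos (E s).2
  obtain ⟨N, hN⟩ := exists_dfa_of_retract M
    (fun s => (⟨(E s : ℕ), lt_of_lt_of_le (E s).2 hm⟩ : Fin m))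
    (fun t => if h : (t : ℕ) < c then E.symm ⟨t, h⟩ else M.start) hretr
  exact ⟨N, hN⟩

open Classical in
/-- The "characteristic" map used to exhibit merged states: sends `F` to `i` and
its complement to `j`. -/
noncomputable def chi {Q : Type} (F : Set Q) (i j : Q) : Q → Q :=
  fun q => if q ∈ F then i else j

lemma chi_rel {Q : Type} (F : Set Q) (q0 i j : Q) (h : Q → Q) :
    (h (chi F i j (h (chi F i j q0))) ∈ F ↔ h (chi F j i (h (chi F j i q0))) ∈ F) := by
  by_cases h0 : q0 ∈ F <;> by_cases hi : h i ∈ F <;> by_cases hj : h j ∈ F <;>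
    simp [chi, h0, hi, hj]

lemma chi_eval {Q : Type} (F : Set Q) (i j q : Q) (hq : q ∈ F) : chi F i j q = i := by
  simp [chi, hq]

lemma chi_eval' {Q : Type} (F : Set Q) (i j q : Q) (hq : q ∉ F) : chi F i j q = j := by
  simp [chi, hq]

/-- The key construction: the square root of a language recognized by an `n`-state DFA is
recognized by `n^n - n(n-1)/2` states, for `n ≥ 3`. -/
lemma sqrt_recog {Γ : Type} {n : ℕ} (hn : 2 < n) (M : DFA Γ (Fin n)) :
    recognizedBy (sqrtLang M.accepts) (n ^ n - n * (n - 1) / 2) := by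
  classical
  set q0 := M.start with hq0
  set F := M.accept with hF
  -- the Nerode-style equivalence on the function monoid
  set rel : (Fin n → Fin n) → (Fin n → Fin n) → Prop := fun f g =>
    ∀ h : Fin n → Fin n, (h (f (h (f q0))) ∈ F ↔ h (g (h (g q0))) ∈ F) with hrel
  set st : Setoid (Fin n → Fin n) :=
    ⟨rel, ⟨fun _ _ => Iff.rfl, fun hfg h => (hfg h).symm,
        fun hfg hgk h => (hfg h).trans (hgk h)⟩⟩ with hst
  have hstep_wd : ∀ (a : Γ) (f g : Fin n → Fin n), f ≈ g →
      (Quotient.mk st (fun q => M.step (f q) a)) = Quotient.mk st (fun q => M.step (g q) a) := by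
    intro a f g hfg
    replace hfg : rel f g := hfg
    exact Quotient.sound (fun h => hfg (fun q => h (M.step q a)))
  have haccept_wd : ∀ (f g : Fin n → Fin n), f ≈ g →
      (f (f q0) ∈ F) = (g (g q0) ∈ F) := by
    intro f g hfg
    replace hfg : rel f g := hfg
    exact propext (hfg id)
  set N : DFA Γ (Quotient st) :=
    ⟨fun c a => Quotient.lift (fun f => Quotient.mk st (fun q => M.step (f q) a))
        (hstep_wd a) c,
      Quotient.mk st id,
      {c | Quotient.lift (fun f => f (f q0) ∈ F) haccept_wd c}⟩ with hNdef
  -- evaluation of the quotient DFA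
  have keyeval : ∀ (w : List Γ) (f : Fin n → Fin n),
      N.evalFrom (Quotient.mk st f) w = Quotient.mk st (fun q => M.evalFrom (f q) w) := by
    intro w
    induction w with
    | nil => intro f; rfl
    | cons a w ih =>
        intro f
        show N.evalFrom (N.step (Quotient.mk st f) a) w = _
        have hstep : N.step (Quotient.mk st f) a
            = Quotient.mk st (fun q => M.step (f q) a) := rfl
        rw [hstep, ih]
        rfl
  have hNaccepts : N.accepts = sqrtLang M.accepts := by
    ext w
    have hev : N.eval w = Quotient.mk st (fun q => M.evalFrom q w) := by
      show N.evalFrom (Quotient.mk st id) w = _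
      rw [keyeval]
      rfl
    rw [DFA.mem_accepts, hev]
    show (M.evalFrom (M.evalFrom q0 w) w ∈ F) ↔ w ∈ sqrtLang M.accepts
    rw [← DFA.evalFrom_of_append]
    rfl
  -- fintype structure on the quotient
  haveI : DecidableEq (Quotient st) := Classical.decEq _
  haveI : Fintype (Quotient st) :=
    Fintype.ofSurjective (Quotient.mk st) (fun c => ⟨c.out, Quotient.out_eq c⟩)
  have hpos : 0 < n := by omega
  -- arithmetic facts
  have hlt : n * (n - 1) / 2 < n ^ n := by
    have h1 : n * (n - 1) < n * n :=
      mul_lt_mul_of_pos_left (show n - 1 < n by omega) hpos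
    have h2 : n * n ≤ n ^ n := by
      calc n * n = n ^ 2 := (sq n).symm
      _ ≤ n ^ n := Nat.pow_le_pow_right hpos (by omega)
    exact lt_of_le_of_lt (Nat.div_le_self _ _) (lt_of_lt_of_le h1 h2)
  -- cardinality bound
  have hcard : Fintype.card (Quotient st) ≤ n ^ n - n * (n - 1) / 2 := by
    by_cases hempty : ∀ q : Fin n, q ∉ F
    · -- all states equivalent
      have hsub : ∀ a b : Quotient st, a = b := by
        refine Quotient.ind₂ (fun f g => ?_)
        exact Quotient.sound (fun h => iff_of_false (hempty _) (hempty _))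
      have h1 : Fintype.card (Quotient st) ≤ 1 :=
        Fintype.card_le_one_iff.2 (fun a b => hsub a b)
      omega
    · by_cases huniv : ∀ q : Fin n, q ∈ F
      · have hsub : ∀ a b : Quotient st, a = b := by
          refine Quotient.ind₂ (fun f g => ?_)
          exact Quotient.sound (fun h => iff_of_true (huniv _) (huniv _))
        have h1 : Fintype.card (Quotient st) ≤ 1 :=
          Fintype.card_le_one_iff.2 (fun a b => hsub a b)
        omega
      · -- proper accept set: exhibit n(n-1)/2 merged pairs
        push_neg at hempty huniv
        obtain ⟨qa, hqa⟩ := hempty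
        obtain ⟨qb, hqb⟩ := huniv
        set S : Finset (Fin n × Fin n) :=
          Finset.univ.filter (fun p => p.1 < p.2) with hS
        set B : Finset (Fin n → Fin n) := S.image (fun p => chi F p.2 p.1) with hB
        -- injectivity of chi in the pair, given properness
        have hchi_inj : ∀ i j i' j' : Fin n, chi F i j = chi F i' j' → i = i' ∧ j = j' := by
          intro i j i' j' heq
          constructor
          · have := congrFun heq qa
            rwa [chi_eval F i j qa hqa, chi_eval F i' j' qa hqa] at this
          · have := congrFun heq qb
            rwa [chi_eval' F i j qb hqb, chi_eval' F i' j' qb hqb] at this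
        -- card of S
        have hScard : S.card = n * (n - 1) / 2 := by
          have hT : (Finset.univ : Finset (Fin n)).offDiag
              = S ∪ S.image Prod.swap := by
            ext p
            simp only [Finset.mem_offDiag, Finset.mem_union, Finset.mem_image, hS,
              Finset.mem_filter, Finset.mem_univ, true_and]
            constructor
            · intro hne
              rcases lt_or_gt_of_ne hne with h | h
              · exact Or.inl h
              · exact Or.inr ⟨p.swap, h, p.swap_swap⟩
            · rintro (h | ⟨q, hq, rfl⟩)
              · exact ne_of_lt h
              · exact (ne_of_lt hq).symm
          have hdisj : Disjoint S (S.image Prod.swap) := by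
            rw [Finset.disjoint_left]
            rintro p hp hp'
            obtain ⟨q, hq, rfl⟩ := Finset.mem_image.1 hp'
            simp only [hS, Finset.mem_filter] at hp hq
            exact absurd hp.2 (not_lt.2 (le_of_lt hq.2))
          have hswapcard : (S.image Prod.swap).card = S.card :=
            Finset.card_image_of_injective S Prod.swap_injective
          have hoff : (Finset.univ : Finset (Fin n)).offDiag.card
              = n * n - n := by
            rw [Finset.offDiag_card]
            simp
          have h2 : 2 * S.card = n * n - n := by
            rw [← hoff, hT, Finset.card_union_of_disjoint hdisj, hswapcard]
            omega
          have hms : n * (n - 1) = n * n - n := by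
            rw [Nat.mul_sub, mul_one]
          rw [hms]
          omega
        have hBcard : B.card = n * (n - 1) / 2 := by
          rw [hB, Finset.card_image_of_injOn, hScard]
          intro p hp p' hp' heq
          obtain ⟨h2, h1⟩ := hchi_inj _ _ _ _ heq
          exact Prod.ext h1 h2
        -- surjectivity onto the quotient avoiding B
        have hsurj : Set.SurjOn (Quotient.mk st) ↑(Finset.univ \ B)
            ↑(Finset.univ : Finset (Quotient st)) := by
          intro c _
          obtain ⟨g, hg⟩ : ∃ g, Quotient.mk st g = c := ⟨c.out, Quotient.out_eq c⟩
          by_cases hgB : g ∈ B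
          · obtain ⟨p, hpS, hpg⟩ := Finset.mem_image.1 hgB
            simp only [hS, Finset.mem_filter, Finset.mem_univ, true_and] at hpS
            refine ⟨chi F p.1 p.2, ?_, ?_⟩
            · simp only [Finset.coe_sdiff, Set.mem_diff, Finset.coe_univ, Set.mem_univ,
                true_and, Finset.mem_coe]
              intro hmem
              obtain ⟨q, hqS, hqe⟩ := Finset.mem_image.1 hmem
              simp only [hS, Finset.mem_filter, Finset.mem_univ, true_and] at hqS
              obtain ⟨h1, h2⟩ := hchi_inj _ _ _ _ hqe.symm
              rw [← h1, ← h2] at hqS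
              exact absurd hpS (not_lt.2 (le_of_lt hqS))
            · rw [← hg, ← hpg]
              exact Quotient.sound (fun h => chi_rel F q0 p.1 p.2 h)
          · exact ⟨g, by simp [hgB], hg⟩
        have hcardle : (Finset.univ : Finset (Quotient st)).card
            ≤ (Finset.univ \ B).card :=
          Finset.card_le_card_of_surjOn (Quotient.mk st) hsurj
        have huc : (Finset.univ : Finset (Fin n → Fin n)).card = n ^ n := by
          rw [Finset.card_univ, Fintype.card_fun]
          simp
        have hsd : (Finset.univ \ B).card = n ^ n - n * (n - 1) / 2 := by
          rw [Finset.card_sdiff_of_subset (Finset.subset_univ B), huc, hBcard]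
        rw [← Finset.card_univ]
        rw [hsd] at hcardle
        exact hcardle
  obtain ⟨N', hN'⟩ := recognizedBy_of_card_le N hcard
  refine ⟨N', ?_⟩
  rw [hN', hNaccepts]

theorem stmt6 (n : ℕ) (hn : 2 < n) (Γ : Type) [Fintype Γ] (L : Language Γ)
    (hreg : ∃ m, recognizedBy L m) (hsc : sc L ≤ n) :
    sc (sqrtLang L) ≤ n ^ n - n * (n - 1) / 2 := by
  have hmem : recognizedBy L (sc L) := Nat.sInf_mem hreg
  obtain ⟨M0, hM0⟩ := hmem
  have hrec : recognizedBy L n := by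
    have := recognizedBy_of_card_le M0 (m := n) (by simpa using hsc)
    rwa [hM0] at this
  obtain ⟨M, hM⟩ := hrec
  have := sqrt_recog hn M
  rw [hM] at this
  exact Nat.sInf_le this
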